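/- Every submodule L of the free module (Z/p^μ)^k is the kernel of some module endomorphism (Z/p^μ)^k → (Z/p^μ)^k. -/

import Mathlib

variable {N : ℕ} {k : ℕ}

private theorem stmt17_aux (hN : N ≠ 0) (L : Submodule (ZMod N) (Fin k → ZMod N)) :
    ∃ f : (Fin k → ZMod N) →ₗ[ZMod N] (Fin k → ZMod N), LinearMap.ker f = L := by
  classical
  set R := ZMod N
  have hNZ : (N : ℤ) ≠ 0 := Int.natCast_ne_zero.mpr hN
  set π : (Fin k → ℤ) →ₗ[ℤ] (Fin k → R) :=
    ((Int.castRingHom R).toIntLinearMap).compLeft (Fin k) with hπ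
  have hπ_apply : ∀ (x : Fin k → ℤ) (i : Fin k), π x i = ((x i : ℤ) : R) := fun x i => rfl
  have hπ_surj : Function.Surjective π := by
    intro x
    refine ⟨fun i => (ZMod.intCast_surjective (x i)).choose, ?_⟩
    funext i
    exact (ZMod.intCast_surjective (x i)).choose_spec
  set Lt : Submodule ℤ (Fin k → ℤ) := (L.restrictScalars ℤ).comap π with hLt
  have hmemLt : ∀ y : Fin k → ℤ, y ∈ Lt ↔ π y ∈ L := fun y => Iff.rfl
  -- N • anything is in Lt
  have hNmem : ∀ y : Fin k → ℤ, (N : ℤ) • y ∈ Lt := by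
    intro y
    rw [hmemLt, map_smul]
    have : ((N : ℤ) • π y) = ((N : ℤ) : R) • π y := by
      ext i; simp [Int.cast_smul_eq_zsmul]
    rw [this]
    simp [R, ZMod.natCast_self]
  obtain ⟨n, snf⟩ := Submodule.smithNormalForm (Pi.basisFun ℤ (Fin k)) Lt
  -- snf.f is surjective
  have hfsurj : Function.Surjective snf.f := by
    intro j
    by_contra hj
    have hj' : j ∉ Set.range snf.f := by simpa using hj
    have h0 := snf.repr_eq_zero_of_notMem_range ⟨(N : ℤ) • snf.bM j, hNmem _⟩ hj'
    rw [map_smul] at h0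
    simp at h0
    exact hN h0
  set E : Fin n ≃ Fin k := Equiv.ofBijective snf.f ⟨snf.f.injective, hfsurj⟩ with hE
  have hfE : ∀ j, snf.f (E.symm j) = j := fun j => E.apply_symm_apply j
  -- a i divides N
  have ha : ∀ i, snf.a i ∣ (N : ℤ) := by
    intro i
    set m : Lt := ⟨(N : ℤ) • snf.bM (snf.f i), hNmem _⟩ with hm
    have h := snf.repr_apply_embedding_eq_repr_smul (m := m) (i := i)
    have hLside : snf.bM.repr (↑m) (snf.f i) = (N : ℤ) := by
      have hc : (↑m : Fin k → ℤ) = (N : ℤ) • snf.bM (snf.f i) := rfl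
      rw [hc, map_smul]
      simp
    have hRside : snf.bN.repr (snf.a i • m) i = snf.a i * snf.bN.repr m i := by
      rw [map_smul]; rfl
    exact ⟨_, by rw [← hLside, h, hRside]⟩
  have haZ : ∀ i, snf.a i ≠ 0 := by
    intro i h
    have := ha i
    rw [h] at this
    exact hNZ ((zero_dvd_iff).mp this)
  -- membership in Lt via coordinates
  have hmem_iff : ∀ y : Fin k → ℤ, y ∈ Lt ↔ ∀ j, snf.a (E.symm j) ∣ snf.bM.repr y j := by
    intro y
    constructor
    · intro hy j
      have h := snf.repr_apply_embedding_eq_repr_smul (m := ⟨y, hy⟩) (i := E.symm j)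
      rw [hfE] at h
      rw [h, map_smul]
      exact ⟨_, rfl⟩
    · intro h
      have : y = ∑ j, ((snf.bM.repr y j / snf.a (E.symm j)) • (snf.bN (E.symm j) : Fin k → ℤ)) := by
        conv_lhs => rw [← snf.bM.sum_repr y]
        refine Finset.sum_congr rfl fun j _ => ?_
        rw [snf.snf (E.symm j), hfE, smul_smul, Int.ediv_mul_cancel (h j)]
      rw [this]
      exact Submodule.sum_mem _ fun j _ => Submodule.smul_mem _ _ (snf.bN (E.symm j)).2
  -- the diagonal entries
  set d : Fin k → ℤ := fun j => (N : ℤ) / snf.a (E.symm j) with hd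
  have hda : ∀ j, snf.a (E.symm j) * d j = (N : ℤ) := fun j =>
    Int.mul_ediv_cancel' (ha (E.symm j))
  have hdZ : ∀ j, d j ≠ 0 := by
    intro j h
    apply hNZ
    rw [← hda j, h, mul_zero]
  -- key divisibility
  have hkey : ∀ (j : Fin k) (c : ℤ), (N : ℤ) ∣ d j * c ↔ snf.a (E.symm j) ∣ c := by
    intro j c
    rw [← hda j]
    constructor
    · intro ⟨e, he⟩
      refine ⟨e, ?_⟩
      have : d j * c = d j * (snf.a (E.symm j) * e) := by rw [he]; ring
      exact mul_left_cancel₀ (hdZ j) this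
    · intro ⟨e, he⟩
      exact ⟨e, by rw [he]; ring⟩
  -- the integer endomorphism, diagonal in basis bM
  set D : (Fin k → ℤ) →ₗ[ℤ] (Fin k → ℤ) := snf.bM.constr ℤ (fun j => d j • snf.bM j) with hD
  have hDrepr : ∀ (y : Fin k → ℤ) (j : Fin k),
      snf.bM.repr (D y) j = d j * snf.bM.repr y j := by
    intro y j
    conv_lhs => rw [← snf.bM.sum_repr y]
    rw [map_sum, map_sum]
    simp only [map_smul, hD, Module.Basis.constr_basis, map_smul, Module.Basis.repr_self]
    simp [Finsupp.single_apply, mul_comm]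
  -- π kills N-multiples
  have hπN : ∀ w : Fin k → ℤ, π ((N : ℤ) • w) = 0 := by
    intro w
    rw [map_smul]
    have : ((N : ℤ) • π w) = ((N : ℤ) : R) • π w := by
      ext i; simp [Int.cast_smul_eq_zsmul]
    rw [this]
    simp [R, ZMod.natCast_self]
  have hker0 : ∀ z : Fin k → ℤ, π z = 0 ↔ ∃ w, z = (N : ℤ) • w := by
    intro z
    constructor
    · intro hz
      refine ⟨fun i => z i / (N : ℤ), ?_⟩
      funext i
      have hdvd : (N : ℤ) ∣ z i := by
        have := congrFun hz i
        rw [hπ_apply] at this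
        exact (ZMod.intCast_zmod_eq_zero_iff_dvd _ _).mp this
      show z i = (N : ℤ) * (z i / (N : ℤ))
      rw [Int.mul_ediv_cancel' hdvd]
    · rintro ⟨w, rfl⟩
      exact hπN w
  have hker : ∀ z : Fin k → ℤ, π z = 0 ↔ ∀ j, (N : ℤ) ∣ snf.bM.repr z j := by
    intro z
    rw [hker0]
    constructor
    · rintro ⟨w, rfl⟩ j
      exact ⟨snf.bM.repr w j, by rw [map_smul]; rfl⟩
    · intro h
      refine ⟨∑ j, (snf.bM.repr z j / (N : ℤ)) • snf.bM j, ?_⟩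
      conv_lhs => rw [← snf.bM.sum_repr z]
      rw [Finset.smul_sum]
      refine Finset.sum_congr rfl fun j _ => ?_
      rw [smul_smul, Int.mul_ediv_cancel' (h j)]
  -- the matrix and the endomorphism over ZMod N
  set Mat : Matrix (Fin k) (Fin k) ℤ := LinearMap.toMatrix' D with hMat
  set fbar : (Fin k → R) →ₗ[R] (Fin k → R) :=
    Matrix.toLin' (Mat.map (Int.cast : ℤ → R)) with hfbar
  have hcomm : ∀ y : Fin k → ℤ, fbar (π y) = π (D y) := by
    intro y
    have hDy : D y = Mat.mulVec y := by
      rw [hMat]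
      rw [← Matrix.toLin'_apply, Matrix.toLin'_toMatrix']
    funext i
    have h1 : fbar (π y) i = ∑ j, ((Mat i j : ℤ) : R) * ((y j : ℤ) : R) := by
      rw [hfbar, Matrix.toLin'_apply]
      simp [Matrix.mulVec, dotProduct, Matrix.map_apply, hπ_apply]
    rw [h1, hπ_apply, hDy]
    rw [Matrix.mulVec, dotProduct]
    push_cast
    exact ((Int.cast_sum _ _).trans (Finset.sum_congr rfl fun j _ => Int.cast_mul _ _)).symm
  refine ⟨fbar, ?_⟩
  ext x
  obtain ⟨y, rfl⟩ := hπ_surj x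
  rw [LinearMap.mem_ker, hcomm y, hker (D y), ← hmemLt y, hmem_iff y]
  simp only [hDrepr]
  exact forall_congr' fun j => hkey j _

theorem stmt17 {p : ℕ} (hp : p.Prime) {μ : ℕ} (hμ : 1 ≤ μ) {k : ℕ}
    (L : Submodule (ZMod (p ^ μ)) (Fin k → ZMod (p ^ μ))) :
    ∃ f : (Fin k → ZMod (p ^ μ)) →ₗ[ZMod (p ^ μ)] (Fin k → ZMod (p ^ μ)),
      LinearMap.ker f = L := by
  exact stmt17_aux (pow_ne_zero μ hp.ne_zero) L
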